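/- If f(s) = p(s)/q(s) is a proper rational function with real coefficients, q is Hurwitz stable of degree n, and Re[f(iω)] > 0 for all real ω, then p is Hurwitz stable (and deg p equals n or n−1). -/

import Mathlib

open Polynomial

/-- A real polynomial is Hurwitz stable if all of its complex roots have
negative real part. -/
def Hurwitz (p : Polynomial ℝ) : Prop :=
  ∀ z : ℂ, (p.map (algebraMap ℝ ℂ)).IsRoot z → z.re < 0

/-- Evaluation of a real polynomial at the purely imaginary number `i ω`. -/
noncomputable def evalI (p : Polynomial ℝ) (ω : ℝ) : ℂ :=
  Polynomial.aeval ((ω : ℂ) * Complex.I) p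

/-- `c / q` is strictly positive real. -/
def SPR (c q : Polynomial ℝ) : Prop :=
  c.degree = q.degree ∧ Hurwitz q ∧ ∀ ω : ℝ, 0 < (evalI c ω / evalI q ω).re

section Aux

open Complex Filter Topology Bornology Set


lemma aux_tendsto_eval_div_pow (P : ℂ[X]) :
    Tendsto (fun z : ℂ => P.eval z / z ^ P.natDegree) (cobounded ℂ) (𝓝 P.leadingCoeff) := by
  set d := P.natDegree with hd
  set G : ℂ → ℂ := fun w => ∑ j ∈ Finset.range (d + 1), P.coeff j * w ^ (d - j) with hG
  have hGcont : Continuous G := by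
    apply continuous_finset_sum
    intro j _
    exact continuous_const.mul (continuous_pow _)
  have hG0 : G 0 = P.leadingCoeff := by
    show (∑ j ∈ Finset.range (d + 1), P.coeff j * (0:ℂ) ^ (d - j)) = P.leadingCoeff
    rw [Finset.sum_eq_single d]
    · rw [Nat.sub_self, pow_zero, mul_one]; rfl
    · intro j hj hne
      have h1 : j < d + 1 := Finset.mem_range.mp hj
      have h2 : d - j ≠ 0 := by omega
      rw [zero_pow h2, mul_zero]
    · intro h; exact absurd (Finset.self_mem_range_succ d) h
  have h1 : Tendsto (fun z : ℂ => G z⁻¹) (cobounded ℂ) (𝓝 P.leadingCoeff) := by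
    rw [← hG0]
    exact (hGcont.tendsto 0).comp tendsto_inv₀_cobounded
  refine h1.congr' ?_
  filter_upwards [eventually_ne_cobounded 0] with z hz
  rw [hG, Polynomial.eval_eq_sum_range, Finset.sum_div]
  refine Finset.sum_congr rfl fun j hj => ?_
  have hjd : j ≤ d := Nat.lt_succ_iff.mp (Finset.mem_range.mp hj)
  have hzj : (z : ℂ) ^ j ≠ 0 := pow_ne_zero _ hz
  have hpow : z ^ d = z ^ j * z ^ (d - j) := by rw [← pow_add, Nat.add_sub_cancel' hjd]
  rw [inv_pow, hpow]
  field_simp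

lemma aux_tendsto_ratio (P Q : ℂ[X]) (hQ : Q ≠ 0) (hle : P.natDegree ≤ Q.natDegree) :
    Tendsto (fun z : ℂ => P.eval z / Q.eval z * z ^ (Q.natDegree - P.natDegree)) (cobounded ℂ)
      (𝓝 (P.leadingCoeff / Q.leadingCoeff)) := by
  have hQl : Q.leadingCoeff ≠ 0 := leadingCoeff_ne_zero.mpr hQ
  have h := (aux_tendsto_eval_div_pow P).div (aux_tendsto_eval_div_pow Q) hQl
  refine h.congr' ?_
  have hq0 : ∀ᶠ z in cobounded ℂ, Q.eval z ≠ 0 := by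
    filter_upwards [(aux_tendsto_eval_div_pow Q).eventually_ne hQl] with z hz h0
    exact hz (by simp [h0])
  filter_upwards [hq0, eventually_ne_cobounded 0] with z hq hz
  have hpow : z ^ Q.natDegree = z ^ P.natDegree * z ^ (Q.natDegree - P.natDegree) := by
    rw [← pow_add, Nat.add_sub_cancel' hle]
  have h1 : (z : ℂ) ^ P.natDegree ≠ 0 := pow_ne_zero _ hz
  have h2 : (z : ℂ) ^ Q.natDegree ≠ 0 := pow_ne_zero _ hz
  rw [Pi.div_apply, hpow]
  field_simp

theorem stmt_0' (p q : Polynomial ℝ) (n : ℕ)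
    (hq : ∀ z : ℂ, (q.map (algebraMap ℝ ℂ)).IsRoot z → z.re < 0) (hqd : q.natDegree = n)
    (hproper : p.degree ≤ q.degree)
    (hpos : ∀ ω : ℝ, 0 < ((Polynomial.aeval ((ω : ℂ) * Complex.I) p : ℂ) /
      (Polynomial.aeval ((ω : ℂ) * Complex.I) q : ℂ)).re) :
    (∀ z : ℂ, (p.map (algebraMap ℝ ℂ)).IsRoot z → z.re < 0) ∧
      (p.natDegree = n ∨ p.natDegree = n - 1) := by
  have hσ : Function.Injective (algebraMap ℝ ℂ) := (algebraMap ℝ ℂ).injective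
  set P : ℂ[X] := p.map (algebraMap ℝ ℂ) with hP
  set Q : ℂ[X] := q.map (algebraMap ℝ ℂ) with hQ
  have hev : ∀ (r : ℝ[X]) (ω : ℝ), (Polynomial.aeval ((ω : ℂ) * Complex.I) r : ℂ)
      = (r.map (algebraMap ℝ ℂ)).eval ((ω : ℂ) * Complex.I) := by
    intro r ω; rw [Polynomial.aeval_def, Polynomial.eval_map]
  -- q is nonzero
  have hq0 : q ≠ 0 := by
    intro h
    have h1 : Q = 0 := by rw [hQ, h, Polynomial.map_zero]
    have := hq 1 (by simp [Polynomial.IsRoot, h1])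
    norm_num at this
  have hQ0 : Q ≠ 0 := fun h => hq0 ((Polynomial.map_eq_zero_iff hσ).mp h)
  -- Q has no roots in the closed right half plane
  have hQz : ∀ z : ℂ, 0 ≤ z.re → Q.eval z ≠ 0 := fun z hz h =>
    absurd (hq z h) (not_lt.mpr hz)
  -- P has no roots on the imaginary axis
  have hPim : ∀ ω : ℝ, P.eval ((ω : ℂ) * Complex.I) ≠ 0 := by
    intro ω h
    have := hpos ω
    rw [hev p ω, hev q ω, h] at this
    simp at this
  have hp0 : p ≠ 0 := by
    intro h
    apply hPim 0
    rw [hP, h]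
    simp
  have hP0 : P ≠ 0 := fun h => hp0 ((Polynomial.map_eq_zero_iff hσ).mp h)
  set F : ℂ → ℂ := fun z => P.eval z / Q.eval z with hF
  have hposF : ∀ ω : ℝ, 0 < (F ((ω : ℂ) * Complex.I)).re := by
    intro ω
    have := hpos ω
    rwa [hev p ω, hev q ω] at this
  have hPd : P.natDegree = p.natDegree := Polynomial.natDegree_map_eq_of_injective hσ p
  have hQd : Q.natDegree = q.natDegree := Polynomial.natDegree_map_eq_of_injective hσ q
  have hdeg : P.natDegree ≤ Q.natDegree := by
    rw [hPd, hQd]; exact Polynomial.natDegree_le_natDegree hproper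
  -- F is bounded on the closed right half plane
  obtain ⟨B, hB⟩ : ∃ B : ℝ, ∀ z : ℂ, 0 ≤ z.re → ‖F z‖ ≤ B := by
    have htr := aux_tendsto_ratio P Q hQ0 hdeg
    set c := P.leadingCoeff / Q.leadingCoeff with hc
    have hev1 : ∀ᶠ z : ℂ in cobounded ℂ, 1 ≤ ‖z‖ ∧
        ‖F z * z ^ (Q.natDegree - P.natDegree)‖ ≤ ‖c‖ + 1 := by
      apply (eventually_cobounded_le_norm 1).and
      filter_upwards [htr.norm.eventually (eventually_le_nhds (lt_add_one ‖c‖))] with z hz using hz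
    rw [← comap_norm_atTop, eventually_comap] at hev1
    obtain ⟨R, hR⟩ := eventually_atTop.mp hev1
    have hbig : ∀ z : ℂ, R ≤ ‖z‖ → ‖F z‖ ≤ ‖c‖ + 1 := by
      intro z hz
      obtain ⟨h1, h2⟩ := hR ‖z‖ hz z rfl
      have h3 : ‖F z‖ ≤ ‖F z‖ * ‖z ^ (Q.natDegree - P.natDegree)‖ := by
        apply le_mul_of_one_le_right (norm_nonneg _)
        rw [norm_pow]
        exact one_le_pow₀ h1
      rw [← norm_mul] at h3
      linarith
    have hK : IsCompact (Metric.closedBall (0:ℂ) R ∩ {z : ℂ | 0 ≤ z.re}) :=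
      (isCompact_closedBall 0 R).inter_right (isClosed_le continuous_const Complex.continuous_re)
    have hFc : ContinuousOn F (Metric.closedBall (0:ℂ) R ∩ {z : ℂ | 0 ≤ z.re}) := by
      apply ContinuousOn.div (Polynomial.continuous P).continuousOn
        (Polynomial.continuous Q).continuousOn
      exact fun z hz => hQz z hz.2
    obtain ⟨B2, hB2⟩ := hK.exists_bound_of_continuousOn hFc
    refine ⟨max (‖c‖ + 1) B2, fun z hz => ?_⟩
    rcases le_or_gt R ‖z‖ with h | h
    · exact le_trans (hbig z h) (le_max_left _ _)
    · refine le_trans (hB2 z ⟨?_, hz⟩) (le_max_right _ _)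
      rw [Metric.mem_closedBall, dist_zero_right]
      exact h.le
  -- Phragmen-Lindelof applied to exp(-F)
  set g : ℂ → ℂ := fun z => Complex.exp (-F z) with hg
  have hgnorm : ∀ z, ‖g z‖ = Real.exp (-(F z).re) := by
    intro z
    rw [hg]
    simp [Complex.norm_exp]
  have hgd : DifferentiableOn ℂ g {z : ℂ | Q.eval z ≠ 0} := by
    apply DifferentiableOn.cexp
    apply DifferentiableOn.neg
    exact ((Polynomial.differentiable P).differentiableOn).div
      ((Polynomial.differentiable Q).differentiableOn) (fun z hz => hz)
  have hsub : {z : ℂ | 0 ≤ z.re} ⊆ {z : ℂ | Q.eval z ≠ 0} := fun z hz => hQz z hz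
  have hsub' : {z : ℂ | 0 < z.re} ⊆ {z : ℂ | Q.eval z ≠ 0} := fun z hz => hQz z (le_of_lt hz)
  have hgdc : DiffContOnCl ℂ g {z : ℂ | 0 < z.re} := by
    refine ⟨hgd.mono hsub', hgd.continuousOn.mono ?_⟩
    rw [closure_setOf_lt_re]
    exact hsub
  have him : ∀ x : ℝ, ‖g ((x : ℂ) * I)‖ ≤ 1 := by
    intro x
    rw [hgnorm, Real.exp_le_one_iff]
    linarith [hposF x]
  have hexp : ∃ cc < (2:ℝ), ∃ B0 : ℝ, g =O[cobounded ℂ ⊓ Filter.principal {z : ℂ | 0 < z.re}]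
      fun z => Real.exp (B0 * ‖z‖ ^ cc) := by
    refine ⟨1, one_lt_two, 0, Asymptotics.IsBigO.of_bound (Real.exp B) ?_⟩
    rw [eventually_inf_principal]
    refine Eventually.of_forall fun z hz => ?_
    have h1 : ‖g z‖ ≤ Real.exp B := by
      rw [hgnorm, Real.exp_le_exp]
      have h2 := hB z (le_of_lt hz)
      have h3 : |(F z).re| ≤ ‖F z‖ := Complex.abs_re_le_norm (F z)
      have := abs_le.mp (le_trans h3 h2)
      linarith [this.1]
    simpa using h1
  have hre : IsBoundedUnder (· ≤ ·) atTop fun x : ℝ => ‖g ((x : ℝ) : ℂ)‖ := by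
    refine ⟨Real.exp B, ?_⟩
    rw [eventually_map]
    filter_upwards [eventually_ge_atTop (0:ℝ)] with x hx
    rw [hgnorm, Real.exp_le_exp]
    have h2 := hB ((x:ℝ):ℂ) (by simpa using hx)
    have h3 : |(F ((x:ℝ):ℂ)).re| ≤ ‖F ((x:ℝ):ℂ)‖ := Complex.abs_re_le_norm _
    have := abs_le.mp (le_trans h3 h2)
    linarith [this.1]
  have hPL : ∀ z : ℂ, 0 ≤ z.re → ‖g z‖ ≤ 1 := fun z hz =>
    PhragmenLindelof.right_half_plane_of_bounded_on_real hgdc hexp hre him hz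
  have hFre : ∀ z : ℂ, 0 ≤ z.re → 0 ≤ (F z).re := by
    intro z hz
    have := hPL z hz
    rw [hgnorm, Real.exp_le_one_iff, neg_nonpos] at this
    exact this
  -- Hurwitz stability of p
  have hHur : ∀ z : ℂ, P.IsRoot z → z.re < 0 := by
    intro z hzroot
    by_contra hcon
    push_neg at hcon
    rcases eq_or_lt_of_le hcon with heq | hlt
    · apply hPim z.im
      have hz : z = (z.im : ℂ) * I := by
        apply Complex.ext <;> simp [← heq]
      rw [← hz]
      exact hzroot
    · have hFz : F z = 0 := by
        rw [hF]
        simp only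
        rw [show P.eval z = 0 from hzroot, zero_div]
      have hgz : ‖g z‖ = 1 := by rw [hgnorm, hFz]; simp
      have hmax : IsMaxOn (norm ∘ g) {w : ℂ | 0 < w.re} z := by
        intro w hw
        have : ‖g w‖ ≤ 1 := hPL w (le_of_lt hw)
        simpa [hgz] using this
      have heqOn := Complex.eqOn_closure_of_isPreconnected_of_isMaxOn_norm
        (convex_halfSpace_re_gt 0).isPreconnected
        (isOpen_lt continuous_const Complex.continuous_re) hgdc hlt hmax
      have h0 : (0:ℂ) ∈ closure {w : ℂ | 0 < w.re} := by
        rw [closure_setOf_lt_re]; simp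
      have hg0 : g 0 = g z := heqOn h0
      have h1 : ‖g 0‖ = 1 := by rw [hg0]; exact hgz
      rw [hgnorm] at h1
      have h2 : (F 0).re = 0 := by
        have h4 := congrArg Real.log h1
        rw [Real.log_exp, Real.log_one] at h4
        linarith
      have h3 : 0 < (F 0).re := by simpa using hposF 0
      linarith
  refine ⟨hHur, ?_⟩
  -- degree statement
  have hdn : p.natDegree ≤ n := hqd ▸ Polynomial.natDegree_le_natDegree hproper
  by_contra hcon
  push_neg at hcon
  obtain ⟨h1, h2⟩ := hcon
  set d := p.natDegree with hdd
  set r := n - d with hr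
  have hr2 : 2 ≤ r := by omega
  have hPl : P.leadingCoeff = ((p.leadingCoeff : ℝ) : ℂ) := Polynomial.leadingCoeff_map_of_injective hσ p
  have hQl : Q.leadingCoeff = ((q.leadingCoeff : ℝ) : ℂ) := Polynomial.leadingCoeff_map_of_injective hσ q
  set cr : ℝ := p.leadingCoeff / q.leadingCoeff with hcr
  have hcrne : cr ≠ 0 := div_ne_zero (Polynomial.leadingCoeff_ne_zero.mpr hp0)
    (Polynomial.leadingCoeff_ne_zero.mpr hq0)
  have hπ := Real.pi_pos
  set θ : ℝ := if 0 < cr then 3 * Real.pi / (4 * r) else 0 with hθ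
  have hθ0 : 0 ≤ θ := by
    rw [hθ]; split
    · positivity
    · exact le_refl 0
  have hθlt : θ < Real.pi / 2 := by
    rw [hθ]; split
    · have h8 : (8:ℝ) ≤ 4 * (r:ℝ) := by
        have : (2:ℝ) ≤ (r:ℝ) := by exact_mod_cast hr2
        linarith
      have hle : 3 * Real.pi / (4 * (r:ℝ)) ≤ 3 * Real.pi / 8 :=
        div_le_div_of_nonneg_left (by positivity) (by norm_num) h8
      linarith
    · linarith
  have hcosθ : 0 < Real.cos θ := Real.cos_pos_of_mem_Ioo ⟨by linarith, hθlt⟩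
  have hneg : cr * Real.cos (r * θ) < 0 := by
    rw [hθ]; split_ifs with hcc
    · have hrne : ((r:ℕ):ℝ) ≠ 0 := Nat.cast_ne_zero.mpr (by omega)
      have heq34 : ((r:ℕ):ℝ) * (3 * Real.pi / (4 * r)) = 3 * Real.pi / 4 := by
        field_simp
      rw [heq34]
      have hcos34 : Real.cos (3 * Real.pi / 4) < 0 := by
        have h34 : 3 * Real.pi / 4 = Real.pi - Real.pi / 4 := by ring
        rw [h34, Real.cos_pi_sub, Real.cos_pi_div_four]
        have : (0:ℝ) < Real.sqrt 2 / 2 := by positivity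
        linarith
      exact mul_neg_of_pos_of_neg hcc hcos34
    · have hc' : cr < 0 := lt_of_le_of_ne (not_lt.mp hcc) hcrne
      simpa using hc'
  -- the ray
  set e : ℂ := Complex.exp ((θ : ℂ) * I) with he
  have henorm : ‖e‖ = 1 := by
    rw [he, Complex.norm_exp]
    simp
  set zray : ℝ → ℂ := fun M => (M : ℂ) * e with hzray
  have hznorm : ∀ M : ℝ, 0 ≤ M → ‖zray M‖ = M := by
    intro M hM
    rw [hzray]
    simp only [norm_mul, henorm, Complex.norm_real, Real.norm_eq_abs, mul_one]
    exact abs_of_nonneg hM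
  have hzre : ∀ M : ℝ, (zray M).re = M * Real.cos θ := by
    intro M
    rw [hzray, he]
    rw [show ((θ:ℂ) * I) = ((θ:ℝ):ℂ) * I from rfl, Complex.exp_mul_I]
    simp [Complex.mul_re, Complex.cos_ofReal_re, Complex.sin_ofReal_re,
      Complex.cos_ofReal_im, Complex.sin_ofReal_im]
  have htends : Tendsto zray atTop (cobounded ℂ) := by
    rw [← tendsto_norm_atTop_iff_cobounded]
    apply Tendsto.congr' _ tendsto_id
    filter_upwards [eventually_ge_atTop (0:ℝ)] with M hM
    exact (hznorm M hM).symm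
  have hRdeg : Q.natDegree - P.natDegree = r := by rw [hPd, hQd, hqd]
  have hval : P.leadingCoeff / Q.leadingCoeff = ((cr:ℝ) : ℂ) := by
    rw [hPl, hQl, hcr, Complex.ofReal_div]
  have htr := (aux_tendsto_ratio P Q hQ0 hdeg).comp htends
  rw [hval] at htr
  set w : ℝ → ℂ := fun M => F (zray M) * (zray M) ^ r with hw
  have htr2 : Tendsto w atTop (𝓝 ((cr:ℝ) : ℂ)) := by
    rw [hw]
    convert htr using 2 with M
    rw [hRdeg]
    rfl
  have hrecr : ∀ (u : ℂ) (a : ℝ), (u * Complex.exp (-(a:ℂ) * I)).re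
      = u.re * Real.cos a + u.im * Real.sin a := by
    intro u a
    have hna : (-(a:ℂ)) = ((-a : ℝ) : ℂ) := by push_cast; ring
    rw [hna, Complex.exp_mul_I]
    simp [Complex.mul_re, Complex.mul_im, Real.cos_neg, Real.sin_neg,
      Complex.cos_ofReal_re, Complex.sin_ofReal_re, Complex.cos_ofReal_im, Complex.sin_ofReal_im]
  set a : ℝ := (r : ℝ) * θ with ha
  have hcont : Tendsto (fun M => (w M * Complex.exp (-(a:ℂ) * I)).re) atTop
      (𝓝 ((((cr:ℝ):ℂ) * Complex.exp (-(a:ℂ) * I)).re)) := by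
    exact (Complex.continuous_re.tendsto _).comp (htr2.mul_const _)
  have hlimval : (((cr:ℝ):ℂ) * Complex.exp (-(a:ℂ) * I)).re = cr * Real.cos a := by
    rw [hrecr]
    simp
  rw [hlimval] at hcont
  have hevneg : ∀ᶠ M : ℝ in atTop, (w M * Complex.exp (-(a:ℂ) * I)).re < 0 :=
    hcont.eventually (Iio_mem_nhds hneg)
  obtain ⟨M, hM1, hMneg⟩ := ((eventually_ge_atTop (1:ℝ)).and hevneg).exists
  obtain ⟨hM1, hMneg⟩ := And.intro hM1 hMneg
  have hMpos : (0:ℝ) < M := lt_of_lt_of_le one_pos hM1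
  have hzne : zray M ≠ 0 := by
    intro h
    have := hznorm M hMpos.le
    rw [h, norm_zero] at this
    linarith
  have hpowr : (zray M) ^ r = ((M ^ r : ℝ) : ℂ) * Complex.exp ((a:ℂ) * I) := by
    rw [hzray]
    simp only
    rw [mul_pow, he, ← Complex.exp_nat_mul]
    push_cast [ha]
    ring_nf
  have hFeq : F (zray M) = w M * Complex.exp (-(a:ℂ) * I) / ((M ^ r : ℝ) : ℂ) := by
    have hzr : (zray M) ^ r ≠ 0 := pow_ne_zero _ hzne
    have h1 : F (zray M) = w M / (zray M) ^ r := by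
      rw [hw]
      simp only
      rw [mul_div_cancel_right₀ _ hzr]
    rw [h1, hpowr]
    rw [neg_mul, Complex.exp_neg]
    have hMr : ((M ^ r : ℝ) : ℂ) ≠ 0 := by
      simp only [ne_eq, Complex.ofReal_eq_zero]
      positivity
    field_simp
  have hFneg : (F (zray M)).re < 0 := by
    rw [hFeq, Complex.div_ofReal_re]
    apply div_neg_of_neg_of_pos hMneg
    positivity
  have hFpos := hFre (zray M) (by rw [hzre]; positivity)
  linarith

end Aux

theorem stmt_0 (p q : Polynomial ℝ) (n : ℕ)
    (hq : Hurwitz q) (hqd : q.natDegree = n)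
    (hproper : p.degree ≤ q.degree)
    (hpos : ∀ ω : ℝ, 0 < (evalI p ω / evalI q ω).re) :
    Hurwitz p ∧ (p.natDegree = n ∨ p.natDegree = n - 1) :=
  stmt_0' p q n hq hqd hproper hpos
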